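/- Let P be a regular reductive m×n c-ramified matrix over a group representation (X;G) and for i ∈ {1,…,n} let X_i = { i_x/θ_P : x ∈ X } ⊆ V_{θ_P}. For r ≠ s, X_r ∩ X_s ≠ ∅ if and only if {P^{(r)}, P^{(s)}} is an edge of Gr(P). The equivalence relation on V_{θ_P} generated by the union of X_i × X_i over all i is the universal relation if and only if Gr(P) is connected. Consequently, if the representation (V_{θ_P}; L((X;G);P)) is primitive, then Gr(P) is connected. -/

import Mathlib

section Ramified

variable {X G : Type*} [Group G]

/-- The action of the monomial matrix (triple) `t = [r, g, λ]` on the vector `a = i_x`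
over a ramified matrix `P`:  `[r,g,λ](i_x) = r_{g(P(λ,i)(x))}`. -/
def ramAct (φ : G →* Equiv.Perm X) {m n : ℕ}
    (P : Fin m → Fin n → X → X) (t : Fin n × G × Fin m) (a : Fin n × X) : Fin n × X :=
  (t.1, φ t.2.1 (P t.2.2 a.1 a.2))

/-- The maximal deflation `θ_P`: `(r_x, s_y) ∈ θ_P` iff `P(λ,r)(x) = P(λ,s)(y)` for all
rows `λ`. -/
def thetaP {m n : ℕ} (P : Fin m → Fin n → X → X) (a b : Fin n × X) : Prop :=
  ∀ lam : Fin m, P lam a.1 a.2 = P lam b.1 b.2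

/-- `P` is c-ramified over `(X;G)`: every entry is a permutation coming from `G` or a
constant function. -/
def CRamified (φ : G →* Equiv.Perm X) {m n : ℕ} (P : Fin m → Fin n → X → X) : Prop :=
  ∀ lam i, (∃ g, P lam i = ⇑(φ g)) ∨ ∃ x0, P lam i = fun _ => x0

/-- `P` is regular: every row and every column contains a `G`-entry. -/
def RegularMat (φ : G →* Equiv.Perm X) {m n : ℕ} (P : Fin m → Fin n → X → X) : Prop :=
  (∀ lam, ∃ i g, P lam i = ⇑(φ g)) ∧ ∀ i, ∃ lam g, P lam i = ⇑(φ g)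

/-- `P` is reductive: no two distinct rows are proportional and no two distinct columns
are proportional. -/
def Reductive (φ : G →* Equiv.Perm X) {m n : ℕ} (P : Fin m → Fin n → X → X) : Prop :=
  (∀ μ β : Fin m, (∃ g : G, ∀ i, ⇑(φ g) ∘ P μ i = P β i) → μ = β) ∧
    ∀ r s : Fin n, (∃ h : G, ∀ lam, P lam r ∘ ⇑(φ h) = P lam s) → r = s

/-- The edge relation of the graph `Gr(P)` on the columns of `P`. -/
def GrAdj {m n : ℕ} (P : Fin m → Fin n → X → X) (r s : Fin n) : Prop :=
  r ≠ s ∧ ∃ x y : X, ∀ lam : Fin m, P lam r x = P lam s y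

end Ramified

section Aux

variable {X G : Type*} [Group G]

lemma grAdj_symm {m n : ℕ} {P : Fin m → Fin n → X → X} :
    Symmetric (GrAdj P) := by
  rintro r s ⟨hne, x, y, h⟩
  exact ⟨hne.symm, y, x, fun lam => (h lam).symm⟩

lemma lift_eqvGen {m n : ℕ} {P : Fin m → Fin n → X → X} {a b : Fin n × X}
    (h : Relation.EqvGen (fun p q : Fin n × X => thetaP P p q ∨ p.1 = q.1) a b) :
    Relation.ReflTransGen (GrAdj P) a.1 b.1 := by
  induction h with
  | rel a b hab =>
    rcases hab with hab | hab
    · by_cases h1 : a.1 = b.1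
      · exact h1 ▸ Relation.ReflTransGen.refl
      · exact Relation.ReflTransGen.single ⟨h1, a.2, b.2, hab⟩
    · exact hab ▸ Relation.ReflTransGen.refl
  | refl a => exact Relation.ReflTransGen.refl
  | symm a b _ ih => exact (@Relation.ReflTransGen.stdSymm _ (GrAdj P) ⟨fun _ _ h => grAdj_symm h⟩).symm _ _ ih
  | trans a b c _ _ ih1 ih2 => exact ih1.trans ih2

lemma descend_rtg {m n : ℕ} {P : Fin m → Fin n → X → X} {r s : Fin n}
    (h : Relation.ReflTransGen (GrAdj P) r s) (x y : X) :
    Relation.EqvGen (fun p q : Fin n × X => thetaP P p q ∨ p.1 = q.1) (r, x) (s, y) := by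
  induction h generalizing y with
  | refl => exact Relation.EqvGen.rel _ _ (Or.inr rfl)
  | @tail c d _ hedge ih =>
    obtain ⟨hne, x', y', hxy⟩ := hedge
    exact ((ih x').trans _ _ _
      (Relation.EqvGen.rel (c, x') (d, y') (Or.inl hxy))).trans _ _ _
      (Relation.EqvGen.rel _ _ (Or.inr rfl))

lemma nSubsingleton {m n : ℕ} {φ : G →* Equiv.Perm X} {P : Fin m → Fin n → X → X}
    (hred : Reductive φ P) (hX : Subsingleton X) : ∀ r s : Fin n, r = s := by
  intro r s
  exact hred.2 r s ⟨1, fun lam => funext fun x => Subsingleton.elim _ _⟩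

end Aux


/-- Let `P` be a regular reductive c-ramified matrix over `(X;G)` and, for a column `i`,
let `X_i = {i_x/θ_P : x ∈ X} ⊆ V_{θ_P}`.  Then: for `r ≠ s`, `X_r ∩ X_s ≠ ∅` iff
`{P^{(r)}, P^{(s)}}` is an edge of `Gr(P)`; the equivalence relation on `V_{θ_P}`
generated by the union of the `X_i × X_i` (encoded on `V` as the relation generated by
`θ_P` together with "same first coordinate") is the universal relation iff `Gr(P)` is
connected; and consequently, if the representation `(V_{θ_P}; L((X;G);P))` is primitive
then `Gr(P)` is connected.  (Equivalence relations on the quotient `V_{θ_P}` are encoded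
as equivalence relations on `V` containing `θ_P`; compatibility with the constant maps of
`L((X;G);P)` is automatic.) -/
theorem graph_of_matrix_and_primitivity {X G : Type*} [Fintype X] [Group G] [Fintype G]
    (φ : G →* Equiv.Perm X) {m n : ℕ} (P : Fin m → Fin n → X → X)
    (hcram : CRamified φ P) (hreg : RegularMat φ P) (hred : Reductive φ P) :
    (∀ r s : Fin n, r ≠ s →
      ((∃ x y : X, thetaP P (r, x) (s, y)) ↔ GrAdj P r s)) ∧
    ((∀ a b : Fin n × X,
        Relation.EqvGen (fun p q => thetaP P p q ∨ p.1 = q.1) a b) ↔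
      ∀ r s : Fin n, Relation.ReflTransGen (GrAdj P) r s) ∧
    ((∀ β : (Fin n × X) → (Fin n × X) → Prop, Equivalence β →
        (∀ a b, thetaP P a b → β a b) →
        (∀ a b, β a b → ∀ t : Fin n × G × Fin m,
          β (ramAct φ P t a) (ramAct φ P t b)) →
        (∀ a b, β a b → thetaP P a b) ∨ (∀ a b, β a b)) →
      ∀ r s : Fin n, Relation.ReflTransGen (GrAdj P) r s) := by

  have part2 : (∀ a b : Fin n × X,
        Relation.EqvGen (fun p q => thetaP P p q ∨ p.1 = q.1) a b) ↔
      ∀ r s : Fin n, Relation.ReflTransGen (GrAdj P) r s := by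
    constructor
    · intro huniv r s
      by_cases hX : Nonempty X
      · obtain ⟨x⟩ := hX
        exact lift_eqvGen (huniv (r, x) (s, x))
      · have : Subsingleton X := ⟨fun a => absurd ⟨a⟩ hX⟩
        exact (nSubsingleton hred this r s) ▸ Relation.ReflTransGen.refl
    · intro hconn a b
      exact descend_rtg (hconn a.1 b.1) a.2 b.2
  refine ⟨?_, part2, ?_⟩
  · intro r s hrs
    constructor
    · rintro ⟨x, y, h⟩; exact ⟨hrs, x, y, h⟩
    · rintro ⟨-, x, y, h⟩; exact ⟨x, y, h⟩
  · intro hprim r s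
    set β := Relation.EqvGen (fun p q : Fin n × X => thetaP P p q ∨ p.1 = q.1) with hβ
    have hequiv : Equivalence β := Relation.EqvGen.is_equivalence _
    have hθ : ∀ a b, thetaP P a b → β a b := fun a b h => Relation.EqvGen.rel _ _ (Or.inl h)
    have hact : ∀ a b, β a b → ∀ t : Fin n × G × Fin m,
        β (ramAct φ P t a) (ramAct φ P t b) := by
      intro a b h t
      induction h with
      | rel a b hab =>
        rcases hab with hab | hab
        · have : ramAct φ P t a = ramAct φ P t b := by
            simp only [ramAct, hab t.2.2]
          exact this ▸ hequiv.refl _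
        · exact Relation.EqvGen.rel _ _ (Or.inr rfl)
      | refl a => exact hequiv.refl _
      | symm a b _ ih => exact hequiv.symm ih
      | trans a b c _ _ ih1 ih2 => exact hequiv.trans ih1 ih2
    rcases hprim β hequiv hθ hact with hsub | huniv
    · -- β ⊆ θ_P forces X subsingleton
      have hXsub : Subsingleton X := by
        constructor
        intro x y
        obtain ⟨lam, g, hlam⟩ := hreg.2 r
        have := hsub (r, x) (r, y) (Relation.EqvGen.rel _ _ (Or.inr rfl)) lam
        simp only [hlam] at this
        exact (φ g).injective this
      exact (nSubsingleton hred hXsub r s) ▸ Relation.ReflTransGen.refl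
    · exact part2.mp huniv r s
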